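/- Let m ≥ 2 be an integer and r₀ > 0. Let ρ : [0, r₀] → ℝ be continuous and continuously differentiable on (0, r₀], with ρ(0) = 0 and ρ > 0 on (0, r₀], and let q₀ : [0, r₀] → ℝ be continuous. Suppose h₁, h₂ : [0, r₀] → ℝ are continuous with h₁(0) = h₂(0) = 0, differentiable on (0, r₀], and both satisfy the Riccati equation h'(t) = q₀(t) − (m−1) (ρ'(t)/ρ(t)) h(t) + h(t)²/2 for all t ∈ (0, r₀]. Then h₁ = h₂ on [0, r₀]. -/

import Mathlib

open Set Filter Topology Real

/-- Uniqueness for the Riccati equation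
`h' = q₀ − (m−1)(ρ'/ρ) h + h²/2` on `(0, r₀]` with regular singular point at
`t = 0` (`ρ(0) = 0`, `ρ > 0` on `(0, r₀]`) and initial condition `h(0) = 0`:
two continuous solutions coincide on `[0, r₀]`. -/
theorem stmt_14 (m : ℕ) (hm : 2 ≤ m) (r₀ : ℝ) (hr : 0 < r₀)
    (ρ ρ' q₀ h₁ h₂ : ℝ → ℝ)
    (hρc : ContinuousOn ρ (Icc 0 r₀)) (hρ0 : ρ 0 = 0)
    (hρpos : ∀ t ∈ Ioc 0 r₀, 0 < ρ t)
    (hρd : ∀ t ∈ Ioc 0 r₀, HasDerivWithinAt ρ (ρ' t) (Icc 0 r₀) t)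
    (hρ'c : ContinuousOn ρ' (Ioc 0 r₀))
    (hq₀ : ContinuousOn q₀ (Icc 0 r₀))
    (hh₁c : ContinuousOn h₁ (Icc 0 r₀)) (hh₁0 : h₁ 0 = 0)
    (hh₂c : ContinuousOn h₂ (Icc 0 r₀)) (hh₂0 : h₂ 0 = 0)
    (hode₁ : ∀ t ∈ Ioc 0 r₀, HasDerivWithinAt h₁
      (q₀ t - ((m : ℝ) - 1) * (ρ' t / ρ t) * h₁ t + h₁ t ^ 2 / 2) (Ioc 0 r₀) t)
    (hode₂ : ∀ t ∈ Ioc 0 r₀, HasDerivWithinAt h₂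
      (q₀ t - ((m : ℝ) - 1) * (ρ' t / ρ t) * h₂ t + h₂ t ^ 2 / 2) (Ioc 0 r₀) t) :
    EqOn h₁ h₂ (Icc 0 r₀) := by
  obtain ⟨k, rfl⟩ : ∃ k, m = k + 2 := ⟨m - 2, by omega⟩
  set w : ℝ → ℝ := fun t => ρ t ^ (k + 1) * (h₁ t - h₂ t) with hwdef
  have hwc : ContinuousOn w (Icc 0 r₀) := (hρc.pow _).mul (hh₁c.sub hh₂c)
  have hw0 : w 0 = 0 := by simp [hwdef, hρ0]
  -- bound on (h₁+h₂)/2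
  obtain ⟨C, hC⟩ := isCompact_Icc.exists_bound_of_continuousOn
    ((hh₁c.add hh₂c).div_const 2)
  set K : ℝ := max C 0 with hKdef
  have hK0 : 0 ≤ K := le_max_right _ _
  -- derivative of w on Ioc
  have hwd : ∀ t ∈ Ioc 0 r₀,
      HasDerivWithinAt w ((h₁ t + h₂ t) / 2 * w t) (Ioc 0 r₀) t := by
    intro t ht
    have hρne : ρ t ≠ 0 := (hρpos t ht).ne'
    have hpow : HasDerivWithinAt (fun s => ρ s ^ (k + 1))
        ((k + 1 : ℕ) * ρ t ^ k * ρ' t) (Ioc 0 r₀) t := by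
      simpa using ((hρd t ht).mono Ioc_subset_Icc_self).fun_pow (k + 1)
    have := hpow.fun_mul ((hode₁ t ht).fun_sub (hode₂ t ht))
    refine this.congr_deriv ?_
    have h1 : ρ t ^ (k + 1) = ρ t * ρ t ^ k := by ring
    simp only [hwdef]
    field_simp
    push_cast
    ring
  -- main claim: w = 0 on Icc 0 r₀
  have hwzero : ∀ x ∈ Icc 0 r₀, w x = 0 := by
    intro x hx
    rcases eq_or_lt_of_le hx.1 with h0 | h0
    · rw [← h0]; exact hw0
    -- Gronwall on [ε, r₀] for every ε ∈ (0, x]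
    have key : ∀ ε ∈ Ioc (0:ℝ) x, ‖w x‖ ≤ ‖w ε‖ * exp (K * r₀) := by
      intro ε hε
      have hεr : ε ≤ r₀ := hε.2.trans hx.2
      have hG := norm_le_gronwallBound_of_norm_deriv_right_le
        (f := w) (f' := fun t => (h₁ t + h₂ t) / 2 * w t) (δ := ‖w ε‖) (K := K)
        (ε := 0) (a := ε) (b := r₀)
        (hwc.mono (Icc_subset_Icc hε.1.le le_rfl))
        (fun y hy => by
          have hy' : y ∈ Ioc 0 r₀ := ⟨hε.1.trans_le hy.1, hy.2.le⟩
          refine (hwd y hy').mono_of_mem_nhdsWithin ?_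
          refine Filter.mem_of_superset (mem_nhdsWithin_of_mem_nhds
            (Ioo_mem_nhds hy'.1 hy.2)) ?_
          exact fun z hz => ⟨hz.1, hz.2.le⟩)
        le_rfl
        (fun y hy => by
          have hy' : y ∈ Icc 0 r₀ := ⟨(hε.1.trans_le hy.1).le, hy.2.le⟩
          have : ‖(h₁ y + h₂ y) / 2 * w y‖ = ‖(h₁ y + h₂ y) / 2‖ * ‖w y‖ :=
            norm_mul _ _
          rw [this, add_zero]
          exact mul_le_mul_of_nonneg_right ((hC y hy').trans (le_max_left _ _))
            (norm_nonneg _) |>.trans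
            (mul_le_mul_of_nonneg_right le_rfl (norm_nonneg _)))
      have hxmem : x ∈ Icc ε r₀ := ⟨hε.2, hx.2⟩
      have := hG x hxmem
      rw [gronwallBound_ε0] at this
      refine this.trans ?_
      have : exp (K * (x - ε)) ≤ exp (K * r₀) :=
        exp_le_exp.2 (mul_le_mul_of_nonneg_left (by linarith [hε.1, hx.2]) hK0)
      exact mul_le_mul_of_nonneg_left this (norm_nonneg _)
    -- take ε → 0⁺
    have hfilter : 𝓝[Ioc (0:ℝ) r₀] 0 = 𝓝[>] (0:ℝ) :=
      nhdsWithin_Ioc_eq_nhdsGT hr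
    have htend : Tendsto (fun ε => ‖w ε‖ * exp (K * r₀)) (𝓝[>] (0:ℝ)) (𝓝 0) := by
      have h1 : Tendsto w (𝓝[Ioc (0:ℝ) r₀] 0) (𝓝 0) := by
        have := (hwc 0 ⟨le_rfl, hr.le⟩).mono Ioc_subset_Icc_self
        rw [ContinuousWithinAt, hw0] at this
        exact this
      rw [hfilter] at h1
      have := (h1.norm.mul_const (exp (K * r₀)))
      simpa using this
    have hev : ∀ᶠ ε in 𝓝[>] (0:ℝ), ‖w x‖ ≤ ‖w ε‖ * exp (K * r₀) := by
      filter_upwards [Ioo_mem_nhdsGT_of_mem (Set.left_mem_Ico.2 h0)] with ε hε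
      exact key ε ⟨hε.1, hε.2.le⟩
    have : ‖w x‖ ≤ 0 := ge_of_tendsto htend hev
    simpa using le_antisymm this (norm_nonneg _)
  intro x hx
  rcases eq_or_lt_of_le hx.1 with h0 | h0
  · rw [← h0, hh₁0, hh₂0]
  · have hρne : ρ x ^ (k + 1) ≠ 0 := pow_ne_zero _ (hρpos x ⟨h0, hx.2⟩).ne'
    have := hwzero x hx
    rw [hwdef] at this
    have := mul_eq_zero.1 this
    rcases this with h | h
    · exact absurd h hρne
    · linarith
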